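/- arXiv:2102.10669 — 2 statements merged into one kernel-verified Lean document; each statement's English description precedes it below -/
import Mathlib

section
/- Let p ≥ 1, let φ_1, …, φ_p ∈ ℝ, and let γ : ℤ → ℝ be even and satisfy γ(h) = Σ_{j=1}^p φ_j γ(h−j) for h = 1 and h = 2. Define γ_d(h) = 2γ(h) − γ(h+1) − γ(h−1), assume γ_d(0) ≠ 0, and set ρ_d(h) = γ_d(h)/γ_d(0). Then ρ_d(1) + 1/2 = φ_1/2 − φ_2/2 − φ_3·[1/2 + ρ_d(1)] − ⋯ − φ_p·[1/2 + ρ_d(1) + ⋯ + ρ_d(p−2)], i.e., ρ_d(1) + 1/2 = φ_1/2 − Σ_{j=2}^p φ_j·(1/2 + Σ_{ℓ=1}^{j−2} ρ_d(ℓ)), where the inner sum is empty when j = 2. -/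
/-- If the even function `γ : ℤ → ℝ` satisfies the order-`p` Yule–Walker recursion at lags
`h = 1` and `h = 2`, then the differenced autocorrelations `ρd h = γd h / γd 0` (with
`γd h = 2 γ h - γ (h+1) - γ (h-1)`, `γd 0 ≠ 0`) satisfy
`ρd 1 + 1/2 = φ 1 / 2 - ∑_{j=2}^p φ j * (1/2 + ∑_{ℓ=1}^{j-2} ρd ℓ)`. -/
theorem diff_autocorr_first_equation (p : ℕ) (hp : 1 ≤ p) (φ : ℕ → ℝ) (γ : ℤ → ℝ)
    (heven : ∀ h : ℤ, γ (-h) = γ h)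
    (hYW1 : γ 1 = ∑ j ∈ Finset.Icc 1 p, φ j * γ (1 - (j : ℤ)))
    (hYW2 : γ 2 = ∑ j ∈ Finset.Icc 1 p, φ j * γ (2 - (j : ℤ)))
    (γd : ℤ → ℝ) (hγd : ∀ h : ℤ, γd h = 2 * γ h - γ (h + 1) - γ (h - 1))
    (h0 : γd 0 ≠ 0)
    (ρd : ℤ → ℝ) (hρd : ∀ h : ℤ, ρd h = γd h / γd 0) :
    ρd 1 + 1 / 2 =
      φ 1 / 2 -
        ∑ j ∈ Finset.Icc 2 p, φ j * (1 / 2 + ∑ ℓ ∈ Finset.Icc (1 : ℤ) ((j : ℤ) - 2), ρd ℓ) := by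
  have hγd0 : γd 0 = 2 * γ 0 - 2 * γ 1 := by
    have h1 : γ (0 - 1 : ℤ) = γ 1 := by
      rw [← heven 1]; norm_num
    rw [hγd 0, h1]; norm_num; ring
  -- telescoping sum of γd
  have key : ∀ m : ℕ,
      ∑ ℓ ∈ Finset.Icc (1:ℤ) (m:ℤ), γd ℓ = γ 1 - γ ((m:ℤ) + 1) + γ (m:ℤ) - γ 0 := by
    intro m
    induction m with
    | zero => norm_num
    | succ n ih =>
      rw [show Finset.Icc (1:ℤ) ((n+1:ℕ):ℤ) = insert ((n:ℤ)+1) (Finset.Icc 1 (n:ℤ)) by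
            ext x; simp only [Finset.mem_Icc, Finset.mem_insert]; omega,
          Finset.sum_insert (by simp), ih, hγd ((n:ℤ)+1),
          show (n:ℤ)+1-1 = (n:ℤ) from by ring]
      push_cast
      ring
  -- each RHS bracket as a quotient
  have hterm : ∀ j ∈ Finset.Icc 2 p,
      φ j * (1/2 + ∑ ℓ ∈ Finset.Icc (1:ℤ) ((j:ℤ)-2), ρd ℓ)
        = φ j * ((γ ((j:ℤ)-2) - γ ((j:ℤ)-1)) / γd 0) := by
    intro j hj
    have hj2 : ((j - 2 : ℕ) : ℤ) = (j:ℤ) - 2 := by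
      simp only [Finset.mem_Icc] at hj; omega
    have hs : ∑ ℓ ∈ Finset.Icc (1:ℤ) ((j:ℤ)-2), ρd ℓ
        = (∑ ℓ ∈ Finset.Icc (1:ℤ) ((j:ℤ)-2), γd ℓ) / γd 0 := by
      rw [Finset.sum_div]; exact Finset.sum_congr rfl fun ℓ _ => hρd ℓ
    have hk := key (j - 2)
    rw [hj2, show (j:ℤ)-2+1 = (j:ℤ)-1 from by ring] at hk
    rw [hs, hk]
    congr 1
    have hinv : γd 0 * (γd 0)⁻¹ = 1 := mul_inv_cancel₀ h0
    linear_combination (1 / (2 * γd 0)) * hγd0 + (-1/2 : ℝ) * hinv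
  -- difference of the two Yule–Walker equations
  have hsplit : Finset.Icc 1 p = insert 1 (Finset.Icc 2 p) := by
    ext x; simp only [Finset.mem_Icc, Finset.mem_insert]; omega
  have hY1 : γ 1 = φ 1 * γ 0 + ∑ j ∈ Finset.Icc 2 p, φ j * γ (1 - (j:ℤ)) := by
    rw [hYW1, hsplit, Finset.sum_insert (by simp)]; norm_num
  have hY2 : γ 2 = φ 1 * γ 1 + ∑ j ∈ Finset.Icc 2 p, φ j * γ (2 - (j:ℤ)) := by
    rw [hYW2, hsplit, Finset.sum_insert (by simp)]; norm_num
  have hsum : ∑ j ∈ Finset.Icc 2 p, φ j * γ (1 - (j:ℤ))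
        - ∑ j ∈ Finset.Icc 2 p, φ j * γ (2 - (j:ℤ))
      = - ∑ j ∈ Finset.Icc 2 p, φ j * (γ ((j:ℤ)-2) - γ ((j:ℤ)-1)) := by
    rw [← Finset.sum_sub_distrib, ← Finset.sum_neg_distrib]
    refine Finset.sum_congr rfl fun j hj => ?_
    have e1 : γ (1 - (j:ℤ)) = γ ((j:ℤ) - 1) := by
      rw [← heven ((j:ℤ)-1)]; congr 1; ring
    have e2 : γ (2 - (j:ℤ)) = γ ((j:ℤ) - 2) := by
      rw [← heven ((j:ℤ)-2)]; congr 1; ring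
    rw [e1, e2]; ring
  have hdiff : γ 1 - γ 2 = φ 1 * (γ 0 - γ 1)
      - ∑ j ∈ Finset.Icc 2 p, φ j * (γ ((j:ℤ)-2) - γ ((j:ℤ)-1)) := by
    linear_combination hY1 - hY2 + hsum
  -- assemble
  rw [Finset.sum_congr rfl hterm, hρd 1, hγd 1]
  have hS : ∑ j ∈ Finset.Icc 2 p, φ j * ((γ ((j:ℤ)-2) - γ ((j:ℤ)-1)) / γd 0)
      = (∑ j ∈ Finset.Icc 2 p, φ j * (γ ((j:ℤ)-2) - γ ((j:ℤ)-1))) / γd 0 := by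
    rw [Finset.sum_div]
    exact Finset.sum_congr rfl fun j _ => (mul_div_assoc _ _ _).symm
  rw [hS, show (1:ℤ)+1 = 2 from by norm_num, show (1:ℤ)-1 = 0 from by norm_num]
  have hinv : γd 0 * (γd 0)⁻¹ = 1 := mul_inv_cancel₀ h0
  linear_combination (1 / γd 0) * hdiff - ((φ 1 - 1) / (2 * γd 0)) * hγd0 + ((φ 1 - 1)/2) * hinv
end

section
/- Let p ≥ 1, let φ = (φ_1, …, φ_p) ∈ ℝ^p, and let γ : ℤ → ℝ be even and satisfy γ(h) = Σ_{j=1}^p φ_j γ(h−j) for every integer h ≥ 1. Define γ_d(h) = 2γ(h) − γ(h+1) − γ(h−1), assume γ_d(0) ≠ 0, and set ρ_d(h) = γ_d(h)/γ_d(0). Let b ∈ ℝ^p be the vector b = (ρ_d(1) + 1/2, ρ_d(2), ρ_d(3), …, ρ_d(p))ᵀ and let M be the p × p matrix whose first row is (1/2, −1/2, −(1/2 + ρ_d(1)), …, −(1/2 + Σ_{ℓ=1}^{p−2} ρ_d(ℓ))) and whose entry in row i (for 2 ≤ i ≤ p) and column j is ρ_d(i − j) (interpreted via evenness ρ_d(−k)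 = ρ_d(k)). Then b = M φ. -/
/-- Yule–Walker-type linear system for the differenced autocorrelations: if the even function
`γ : ℤ → ℝ` satisfies `γ h = ∑_{j=1}^p φ j * γ (h - j)` for all `h ≥ 1`, and `ρd` denotes the
autocorrelation of the differenced series, then the vector
`b = (ρd 1 + 1/2, ρd 2, …, ρd p)ᵀ` equals `M φ`, where the first row of `M` is
`(1/2, -1/2, -(1/2 + ρd 1), …, -(1/2 + ∑_{ℓ=1}^{p-2} ρd ℓ))` and the remaining rows have
entries `ρd (i - j)`. -/
theorem diff_autocorr_linear_system (p : ℕ) (hp : 1 ≤ p) (φ : Fin p → ℝ) (γ : ℤ → ℝ)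
    (heven : ∀ h : ℤ, γ (-h) = γ h)
    (hYW : ∀ h : ℤ, 1 ≤ h → γ h = ∑ j : Fin p, φ j * γ (h - ((j : ℤ) + 1)))
    (γd : ℤ → ℝ) (hγd : ∀ h : ℤ, γd h = 2 * γ h - γ (h + 1) - γ (h - 1))
    (h0 : γd 0 ≠ 0)
    (ρd : ℤ → ℝ) (hρd : ∀ h : ℤ, ρd h = γd h / γd 0)
    (b : Fin p → ℝ)
    (hb : ∀ i : Fin p, b i = if (i : ℕ) = 0 then ρd 1 + 1 / 2 else ρd ((i : ℤ) + 1))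
    (M : Matrix (Fin p) (Fin p) ℝ)
    (hM : ∀ i j : Fin p,
      M i j =
        if (i : ℕ) = 0 then
          (if (j : ℕ) = 0 then 1 / 2
           else -(1 / 2 + ∑ ℓ ∈ Finset.Icc (1 : ℤ) ((j : ℤ) - 1), ρd ℓ))
        else ρd ((i : ℤ) - (j : ℤ))) :
    b = M.mulVec φ := by
  have hγ0 : γd 0 = 2 * γ 0 - 2 * γ 1 := by
    have h1 := heven 1
    have := hγd 0
    norm_num at this ⊢
    rw [this, h1]; ring
  -- telescoping sum
  have htel : ∀ n : ℕ, ∑ ℓ ∈ Finset.Icc (1:ℤ) (n:ℤ), γd ℓ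
      = γ (n:ℤ) - γ ((n:ℤ)+1) - γ 0 + γ 1 := by
    intro n
    induction n with
    | zero =>
      rw [Finset.Icc_eq_empty (by norm_num)]
      simp
    | succ n ih =>
      have hins : Finset.Icc (1:ℤ) ((n:ℤ)+1) = insert ((n:ℤ)+1) (Finset.Icc 1 (n:ℤ)) := by
        ext x; simp only [Finset.mem_Icc, Finset.mem_insert]; omega
      push_cast
      rw [hins, Finset.sum_insert (by simp [Finset.mem_Icc]), ih]
      have := hγd ((n:ℤ)+1)
      have hsimp : ((n:ℤ)+1) - 1 = (n:ℤ) := by ring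
      rw [hsimp] at this
      rw [this]; ring_nf
  -- Yule-Walker for γd
  have hkey : ∀ h : ℤ, 2 ≤ h → γd h = ∑ j : Fin p, φ j * γd (h - ((j:ℤ)+1)) := by
    intro h hh
    rw [hγd, hYW h (by linarith), hYW (h+1) (by linarith), hYW (h-1) (by linarith),
      Finset.mul_sum, ← Finset.sum_sub_distrib, ← Finset.sum_sub_distrib]
    refine Finset.sum_congr rfl fun j _ => ?_
    rw [hγd (h - ((j:ℤ)+1))]
    have e1 : h - ((j:ℤ)+1) + 1 = h + 1 - ((j:ℤ)+1) := by ring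
    have e2 : h - ((j:ℤ)+1) - 1 = h - 1 - ((j:ℤ)+1) := by ring
    rw [e1, e2]; ring
  funext i
  refine mul_right_cancel₀ h0 ?_
  have hmv : M.mulVec φ i = ∑ j : Fin p, M i j * φ j := by
    simp [Matrix.mulVec, dotProduct]
  rw [hmv, hb, Finset.sum_mul]
  by_cases hi : (i : ℕ) = 0
  · rw [if_pos hi]
    have hMj : ∀ j : Fin p, M i j * γd 0 = γ (j:ℤ) - γ ((j:ℤ)-1) := by
      intro j
      rw [hM, if_pos hi]
      by_cases hj : (j : ℕ) = 0
      · rw [if_pos hj]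
        have hj' : (j:ℤ) = 0 := by exact_mod_cast hj
        have h1 := heven 1
        rw [hj']
        norm_num [hγ0]
        rw [h1]; ring
      · rw [if_neg hj]
        have hn : 1 ≤ (j : ℕ) := Nat.one_le_iff_ne_zero.mpr hj
        have hc : ((((j:ℕ) - 1 : ℕ)) : ℤ) = (j:ℤ) - 1 := by
          push_cast [hn]; ring
        have ht := htel ((j:ℕ) - 1)
        rw [hc] at ht
        have hc2 : (j:ℤ) - 1 + 1 = (j:ℤ) := by ring
        rw [hc2] at ht
        have hsum : (∑ ℓ ∈ Finset.Icc (1:ℤ) ((j:ℤ)-1), ρd ℓ) * γd 0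
            = ∑ ℓ ∈ Finset.Icc (1:ℤ) ((j:ℤ)-1), γd ℓ := by
          rw [Finset.sum_mul]
          refine Finset.sum_congr rfl fun ℓ _ => ?_
          rw [hρd, div_mul_cancel₀ _ h0]
        have : (-(1/2 + ∑ ℓ ∈ Finset.Icc (1:ℤ) ((j:ℤ)-1), ρd ℓ)) * γd 0
            = -(γd 0 / 2 + ∑ ℓ ∈ Finset.Icc (1:ℤ) ((j:ℤ)-1), γd ℓ) := by
          rw [← hsum]; ring
        rw [this, ht, hγ0]; ring
    have hR : ∑ j : Fin p, M i j * φ j * γd 0 = ∑ j : Fin p, (γ (j:ℤ) - γ ((j:ℤ)-1)) * φ j := by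
      refine Finset.sum_congr rfl fun j _ => ?_
      rw [show M i j * φ j * γd 0 = (M i j * γd 0) * φ j by ring, hMj]
    rw [hR]
    -- LHS = γ 1 - γ 2
    have hL : (ρd 1 + 1/2) * γd 0 = γ 1 - γ 2 := by
      rw [hρd, add_mul, div_mul_cancel₀ _ h0, hγd 1, hγ0]
      norm_num
      ring
    rw [hL]
    have h1 : γ 1 = ∑ j : Fin p, φ j * γ (j:ℤ) := by
      rw [hYW 1 (by norm_num)]
      refine Finset.sum_congr rfl fun j _ => ?_
      rw [show (1:ℤ) - ((j:ℤ)+1) = -(j:ℤ) by ring, heven]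
    have h2 : γ 2 = ∑ j : Fin p, φ j * γ ((j:ℤ)-1) := by
      rw [hYW 2 (by norm_num)]
      refine Finset.sum_congr rfl fun j _ => ?_
      rw [show (2:ℤ) - ((j:ℤ)+1) = -((j:ℤ)-1) by ring, heven]
    rw [h1, h2, ← Finset.sum_sub_distrib]
    refine Finset.sum_congr rfl fun j _ => ?_
    ring
  · rw [if_neg hi]
    have hi1 : 1 ≤ (i : ℤ) := by
      have : 1 ≤ (i : ℕ) := Nat.one_le_iff_ne_zero.mpr hi
      exact_mod_cast this
    rw [hρd, div_mul_cancel₀ _ h0, hkey ((i:ℤ)+1) (by linarith)]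
    refine Finset.sum_congr rfl fun j _ => ?_
    rw [hM, if_neg hi, hρd, show (i:ℤ)+1 - ((j:ℤ)+1) = (i:ℤ) - (j:ℤ) by ring]
    rw [show γd ((i:ℤ)-(j:ℤ)) / γd 0 * φ j * γd 0
        = (γd ((i:ℤ)-(j:ℤ)) / γd 0 * γd 0) * φ j by ring, div_mul_cancel₀ _ h0, mul_comm]
end
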